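/- The function R ↦ Σ_{n=1}^N log(x_nᵀ R⁻¹ x_n) is geodesically convex on the manifold of symmetric positive definite d×d matrices equipped with the affine-invariant geometry: for any positive definite R₀, R₁ and the geodesic R_t = R₀^{1/2}(R₀^{-1/2} R₁ R₀^{-1/2})^t R₀^{1/2}, the map t ↦ log(xᵀ R_t⁻¹ x) is convex on [0,1] for every nonzero x ∈ ℝ^d. -/

import Mathlib

open Matrix Set

section Aux
open Finset

/-- Log of a positive combination of exponentials is convex. -/
lemma logsumexp_convex {n : ℕ} (c μ : Fin n → ℝ) (hc : ∀ i, 0 ≤ c i)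
    (hex : ∃ j, 0 < c j) :
    ConvexOn ℝ Set.univ (fun t => Real.log (∑ i, c i * Real.exp (μ i * t))) := by
  set g : ℝ → ℝ := fun t => ∑ i, c i * Real.exp (μ i * t) with hg
  have hpos : ∀ t, 0 < g t := by
    intro t
    obtain ⟨j, hj⟩ := hex
    calc (0:ℝ) < c j * Real.exp (μ j * t) := mul_pos hj (Real.exp_pos _)
    _ ≤ g t := Finset.single_le_sum (f := fun i => c i * Real.exp (μ i * t))
        (fun i _ => mul_nonneg (hc i) (Real.exp_pos _).le) (mem_univ j)
  refine ⟨convex_univ, fun p _ q _ a b ha hb hab => ?_⟩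
  simp only [smul_eq_mul]
  rcases eq_or_lt_of_le ha with rfl | ha'
  · simp only [zero_mul, zero_add] at hab ⊢; subst hab; simp
  rcases eq_or_lt_of_le hb with rfl | hb'
  · simp only [zero_mul, add_zero] at hab ⊢; subst hab; simp
  -- key inequality : g (a p + b q) ≤ g p ^ a * g q ^ b
  have key : g (a * p + b * q) ≤ g p ^ a * g q ^ b := by
    have hconj : (1/a).HolderConjugate (1/b) := by
      rw [Real.holderConjugate_iff]
      constructor
      · rw [lt_div_iff₀ ha', one_mul]
        nlinarith
      · rw [one_div, inv_inv, one_div, inv_inv]; exact hab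
    have H := Real.inner_le_Lp_mul_Lq_of_nonneg (s := Finset.univ)
      (f := fun i => (c i * Real.exp (μ i * p)) ^ a)
      (g := fun i => (c i * Real.exp (μ i * q)) ^ b) hconj
      (fun i _ => Real.rpow_nonneg (mul_nonneg (hc i) (Real.exp_pos _).le) _)
      (fun i _ => Real.rpow_nonneg (mul_nonneg (hc i) (Real.exp_pos _).le) _)
    have e1 : ∀ i : Fin n, (c i * Real.exp (μ i * p)) ^ a * (c i * Real.exp (μ i * q)) ^ b
        = c i * Real.exp (μ i * (a * p + b * q)) := by
      intro i
      rw [Real.mul_rpow (hc i) (Real.exp_pos _).le, Real.mul_rpow (hc i) (Real.exp_pos _).le,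
        ← Real.exp_mul, ← Real.exp_mul]
      have : c i ^ a * Real.exp (μ i * p * a) * (c i ^ b * Real.exp (μ i * q * b))
          = (c i ^ a * c i ^ b) * Real.exp (μ i * p * a + μ i * q * b) := by
        rw [Real.exp_add]; ring
      rw [this, ← Real.rpow_add' (hc i) (by rw [hab]; norm_num)]
      rw [hab, Real.rpow_one]
      ring_nf
    have e2 : ∀ (e : ℝ), e ≠ 0 → ∀ (r : ℝ) (i : Fin n),
        ((c i * Real.exp (μ i * r)) ^ e) ^ (1/e) = c i * Real.exp (μ i * r) := by
      intro e he r i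
      rw [← Real.rpow_mul (mul_nonneg (hc i) (Real.exp_pos _).le), mul_one_div, div_self he,
        Real.rpow_one]
    calc g (a * p + b * q)
        = ∑ i, (c i * Real.exp (μ i * p)) ^ a * (c i * Real.exp (μ i * q)) ^ b :=
          Finset.sum_congr rfl (fun i _ => (e1 i).symm)
      _ ≤ (∑ i, ((c i * Real.exp (μ i * p)) ^ a) ^ (1/a)) ^ (1/(1/a)) *
          (∑ i, ((c i * Real.exp (μ i * q)) ^ b) ^ (1/b)) ^ (1/(1/b)) := H
      _ = g p ^ a * g q ^ b := by
          simp only [e2 a ha'.ne', e2 b hb'.ne', one_div_one_div, hg]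
  calc Real.log (g (a * p + b * q)) ≤ Real.log (g p ^ a * g q ^ b) :=
        Real.log_le_log (hpos _) key
    _ = a * Real.log (g p) + b * Real.log (g q) := by
        rw [Real.log_mul (Real.rpow_pos_of_pos (hpos p) a).ne' (Real.rpow_pos_of_pos (hpos q) b).ne',
          Real.log_rpow (hpos p), Real.log_rpow (hpos q)]

end Aux

/-- Geodesic convexity: along the affine-invariant geodesic
`R_t = R₀^{1/2} (R₀^{-1/2} R₁ R₀^{-1/2})^t R₀^{1/2}` (with `S = R₀^{1/2}` and the matrix
power realized as `exp (t L)` for a Hermitian logarithm `L` of `S⁻¹ R₁ S⁻¹`),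
the map `t ↦ log (xᵀ R_t⁻¹ x)` is convex on `[0,1]` for every nonzero `x`. -/
theorem stmt_5 (d : ℕ) (hd : 1 ≤ d)
    (R0 R1 : Matrix (Fin d) (Fin d) ℝ) (h0 : R0.PosDef) (h1 : R1.PosDef)
    (S : Matrix (Fin d) (Fin d) ℝ) (hS : S.PosDef) (hSsq : S * S = R0)
    (L : Matrix (Fin d) (Fin d) ℝ) (hL : L.IsHermitian)
    (hexp : NormedSpace.exp L = S⁻¹ * R1 * S⁻¹)
    (x : Fin d → ℝ) (hx : x ≠ 0) :
    ConvexOn ℝ (Icc (0 : ℝ) 1)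
      (fun t : ℝ => Real.log (x ⬝ᵥ (S * NormedSpace.exp (t • L) * S)⁻¹.mulVec x)) := by
  classical
  set U : Matrix (Fin d) (Fin d) ℝ := (hL.eigenvectorUnitary : Matrix (Fin d) (Fin d) ℝ) with hUdef
  set lam : Fin d → ℝ := hL.eigenvalues with hlam
  have hUU : star U * U = 1 := Matrix.mem_unitaryGroup_iff'.mp hL.eigenvectorUnitary.2
  have hUU' : U * star U = 1 := Matrix.mem_unitaryGroup_iff.mp hL.eigenvectorUnitary.2
  have hUunit : IsUnit U := ⟨⟨U, star U, hUU', hUU⟩, rfl⟩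
  have hUinv : U⁻¹ = star U := Matrix.inv_eq_left_inv hUU
  have hspec : L = U * Matrix.diagonal lam * star U := by
    have := hL.spectral_theorem
    simpa [hUdef, hlam] using this
  have hSunit : IsUnit S := hS.isUnit
  -- the vector z
  set z : Fin d → ℝ := (star U * S⁻¹) *ᵥ x with hz
  have hzne : z ≠ 0 := by
    intro h
    have hMunit : IsUnit (star U * S⁻¹) :=
      ((isUnit_star.mpr hUunit).mul (Matrix.isUnit_nonsing_inv_iff.2 hSunit))
    have := (Matrix.mulVec_injective_iff_isUnit.2 hMunit)
    apply hx
    have h0 : (star U * S⁻¹) *ᵥ x = (star U * S⁻¹) *ᵥ 0 := by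
      simpa [Matrix.mulVec_zero] using h
    exact this h0
  obtain ⟨j, hj⟩ : ∃ j, z j ≠ 0 := by
    by_contra hcon
    push_neg at hcon
    exact hzne (funext hcon)
  -- pointwise identity
  have hfun : ∀ t : ℝ, x ⬝ᵥ (S * NormedSpace.exp (t • L) * S)⁻¹.mulVec x
      = ∑ i, (z i) ^ 2 * Real.exp ((-lam i) * t) := by
    intro t
    have hinv : (S * NormedSpace.exp (t • L) * S)⁻¹
        = S⁻¹ * (NormedSpace.exp (-(t • L)) * S⁻¹) := by
      rw [Matrix.mul_inv_rev, Matrix.mul_inv_rev, Matrix.exp_neg]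
    have hdiag : NormedSpace.exp (-(t • L))
        = U * Matrix.diagonal (fun i => Real.exp (-(t * lam i))) * star U := by
      have h1 : -(t • L) = U * Matrix.diagonal (fun i => -(t * lam i)) * U⁻¹ := by
        rw [hUinv, hspec]
        have hD : Matrix.diagonal (fun i => -(t * lam i)) = -(t • Matrix.diagonal lam) := by
          rw [← Matrix.diagonal_smul, ← Matrix.diagonal_neg]
          congr 1
        rw [hD]
        simp only [Matrix.mul_neg, Matrix.neg_mul, Matrix.mul_smul, Matrix.smul_mul]
      rw [h1, Matrix.exp_conj _ _ hUunit, Matrix.exp_diagonal, hUinv]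
      congr 2
      rw [Pi.exp_def]
      funext i
      rw [← Real.exp_eq_exp_ℝ]
    rw [hinv, hdiag]
    -- now pure linear algebra
    have hSsymm : Sᵀ = S := by
      have := hS.isHermitian.eq
      rwa [Matrix.conjTranspose_eq_transpose_of_trivial] at this
    have hUT : (star U)ᵀ = U := by
      rw [Matrix.star_eq_conjTranspose, Matrix.conjTranspose_eq_transpose_of_trivial,
        Matrix.transpose_transpose]
    have hST : S⁻¹ᵀ = S⁻¹ := by
      rw [Matrix.transpose_nonsing_inv, hSsymm]
    calc x ⬝ᵥ (S⁻¹ * (U * Matrix.diagonal (fun i => Real.exp (-(t * lam i))) * star U *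
            S⁻¹)) *ᵥ x
        = ((star U * S⁻¹) *ᵥ x) ⬝ᵥ (Matrix.diagonal (fun i => Real.exp (-(t * lam i)))) *ᵥ
            ((star U * S⁻¹) *ᵥ x) := by
          have hM : S⁻¹ * (U * Matrix.diagonal (fun i => Real.exp (-(t * lam i))) * star U * S⁻¹)
              = (star U * S⁻¹)ᵀ * (Matrix.diagonal (fun i => Real.exp (-(t * lam i)))
                * (star U * S⁻¹)) := by
            rw [Matrix.transpose_mul, hUT, hST]
            noncomm_ring
          rw [hM, ← Matrix.mulVec_mulVec, Matrix.dotProduct_mulVec, Matrix.vecMul_transpose,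
            Matrix.mulVec_mulVec]
      _ = ∑ i, (z i) ^ 2 * Real.exp ((-lam i) * t) := by
          simp only [dotProduct, Matrix.mulVec_diagonal, ← hz]
          refine Finset.sum_congr rfl fun i _ => ?_
          rw [neg_mul, Real.exp_neg, Real.exp_neg, mul_comm (lam i) t]
          ring
  have hconj : (fun t : ℝ => Real.log (x ⬝ᵥ (S * NormedSpace.exp (t • L) * S)⁻¹.mulVec x))
      = fun t => Real.log (∑ i, (z i) ^ 2 * Real.exp ((-lam i) * t)) := by
    funext t; rw [hfun t]
  rw [hconj]
  exact (logsumexp_convex (fun i => (z i)^2) (fun i => -lam i) (fun i => sq_nonneg _)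
    ⟨j, by positivity⟩).subset (Set.subset_univ _) (convex_Icc 0 1)
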